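/- For a finite DTMC (S, P) and target set B ⊆ S, the reachability probability satisfies the fixed-point equations used by the SMT encoding: Preach s = 1 for every s ∈ B, and Preach s = ∑_{s' ∈ S} P s s' · Preach s' for every s ∉ B. -/
import Mathlib


open scoped Classical

/-- n-step reachability values of a target set `B` in a DTMC with transition
function `P`. -/
noncomputable def reachN {S : Type*} [Fintype S] (P : S → S → ℝ) (B : Set S) :
    ℕ → S → ℝ
  | 0, s => if s ∈ B then 1 else 0
  | n + 1, s => if s ∈ B then 1 else ∑ s' : S, P s s' * reachN P B n s'

lemma reachN_nonneg {S : Type*} [Fintype S] (P : S → S → ℝ)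
    (hP : ∀ s s' : S, 0 ≤ P s s') (B : Set S) :
    ∀ n s, 0 ≤ reachN P B n s := by
  intro n
  induction n with
  | zero => intro s; simp only [reachN]; split <;> norm_num
  | succ n ih =>
    intro s; simp only [reachN]; split
    · norm_num
    · exact Finset.sum_nonneg fun s' _ => mul_nonneg (hP s s') (ih s')

lemma reachN_le_one {S : Type*} [Fintype S] (P : S → S → ℝ)
    (hP : ∀ s s' : S, 0 ≤ P s s') (hsum : ∀ s : S, ∑ s' : S, P s s' = 1)
    (B : Set S) : ∀ n s, reachN P B n s ≤ 1 := by
  intro n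
  induction n with
  | zero => intro s; simp only [reachN]; split <;> norm_num
  | succ n ih =>
    intro s; simp only [reachN]; split
    · norm_num
    · calc ∑ s' : S, P s s' * reachN P B n s' ≤ ∑ s' : S, P s s' := by
            exact Finset.sum_le_sum fun s' _ =>
              mul_le_of_le_one_right (hP s s') (ih s')
        _ = 1 := hsum s

lemma reachN_mono {S : Type*} [Fintype S] (P : S → S → ℝ)
    (hP : ∀ s s' : S, 0 ≤ P s s') (B : Set S) :
    ∀ n s, reachN P B n s ≤ reachN P B (n + 1) s := by
  intro n
  induction n with
  | zero =>
    intro s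
    simp only [reachN]; split
    · exact le_rfl
    · exact Finset.sum_nonneg fun s' _ =>
        mul_nonneg (hP s s') (by split <;> norm_num)
  | succ n ih =>
    intro s
    simp only [reachN]; split
    · exact le_rfl
    · exact Finset.sum_le_sum fun s' _ =>
        mul_le_mul_of_nonneg_left (ih s') (hP s s')

/-- For a finite DTMC (S, P) and target set B ⊆ S, the reachability
probability `Preach s = ⨆ₙ reach n s` satisfies the fixed-point equations used by
the SMT encoding: `Preach s = 1` for `s ∈ B`, and
`Preach s = ∑ s', P s s' * Preach s'` for `s ∉ B`. -/
theorem reach_fixedPoint {S : Type*} [Fintype S] [Nonempty S]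
    (P : S → S → ℝ)
    (hP : ∀ s s' : S, 0 ≤ P s s')
    (hsum : ∀ s : S, ∑ s' : S, P s s' = 1)
    (B : Set S) :
    (∀ s ∈ B, (⨆ n : ℕ, reachN P B n s) = 1) ∧
    (∀ s ∉ B,
        (⨆ n : ℕ, reachN P B n s) = ∑ s' : S, P s s' * ⨆ n : ℕ, reachN P B n s') := by
  have hmono : ∀ s : S, Monotone (fun n => reachN P B n s) := fun s =>
    monotone_nat_of_le_succ (fun n => reachN_mono P hP B n s)
  have hbdd : ∀ s : S, BddAbove (Set.range fun n => reachN P B n s) := fun s =>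
    ⟨1, by rintro x ⟨n, rfl⟩; exact reachN_le_one P hP hsum B n s⟩
  have htend : ∀ s : S, Filter.Tendsto (fun n => reachN P B n s) Filter.atTop
      (nhds (⨆ n : ℕ, reachN P B n s)) := fun s =>
    tendsto_atTop_ciSup (hmono s) (hbdd s)
  constructor
  · intro s hs
    have : ∀ n, reachN P B n s = 1 := by
      intro n; cases n <;> simp [reachN, hs]
    simp [this]
  · intro s hs
    have h1 : Filter.Tendsto (fun n => reachN P B (n + 1) s) Filter.atTop
        (nhds (⨆ n : ℕ, reachN P B n s)) :=
      (htend s).comp (Filter.tendsto_add_atTop_nat 1)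
    have h2 : Filter.Tendsto (fun n => ∑ s' : S, P s s' * reachN P B n s')
        Filter.atTop (nhds (∑ s' : S, P s s' * ⨆ n : ℕ, reachN P B n s')) := by
      apply tendsto_finset_sum
      intro s' _
      exact (htend s').const_mul (P s s')
    have heq : (fun n => reachN P B (n + 1) s)
        = fun n => ∑ s' : S, P s s' * reachN P B n s' := by
      funext n; simp [reachN, hs]
    rw [heq] at h1
    exact tendsto_nhds_unique h1 h2
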